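/- Let h: [0,1]ⁿ → ℝ be twice continuously differentiable with ‖h‖_∞ ≤ α, ‖∂h/∂xᵢ‖_∞ ≤ βᵢ, and ‖∂²h/∂xᵢ∂xⱼ‖_∞ ≤ γᵢⱼ. Fix y ∈ [0,1]ⁿ, let Y = (Y₁,…,Yₙ) have independent Bernoulli(yᵢ) components, and set U = h(Y) - h(y). Then E[U²] ≤ Σᵢ₌₁ⁿ (α γᵢᵢ + βᵢ²). -/

import Mathlib

def boolToReal {n : ℕ} (x : Fin n → Bool) : Fin n → ℝ := fun i => if x i then 1 else 0

def bernWeight {n : ℕ} (y : Fin n → ℝ) (x : Fin n → Bool) : ℝ :=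
  ∏ i, if x i then y i else 1 - y i

lemma sum_bernWeight {n : ℕ} (y : Fin n → ℝ) : ∑ x : Fin n → Bool, bernWeight y x = 1 := by
  unfold bernWeight
  rw [← Fintype.piFinset_univ,
    ← Finset.prod_univ_sum (fun _ => (Finset.univ : Finset Bool))
      (fun i b => if b = true then y i else 1 - y i)]
  simp

lemma bernWeight_nonneg {n : ℕ} {y : Fin n → ℝ} (hy : y ∈ Set.Icc (0 : Fin n → ℝ) 1)
    (x : Fin n → Bool) : 0 ≤ bernWeight y x := by
  apply Finset.prod_nonneg
  intro i _
  have h0 := hy.1 i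
  have h1 := hy.2 i
  simp only [Pi.zero_apply, Pi.one_apply] at h0 h1
  split <;> linarith

lemma boolToReal_mem {n : ℕ} (x : Fin n → Bool) : boolToReal x ∈ Set.Icc (0 : Fin n → ℝ) 1 := by
  constructor <;> intro i <;> simp only [boolToReal, Pi.zero_apply, Pi.one_apply] <;> split <;> norm_num

lemma sum_zero_trick {n : ℕ} (y : Fin n → ℝ) (i : Fin n) (f : (Fin n → Bool) → ℝ) :
    ∑ x : Fin n → Bool, bernWeight y x * ((boolToReal x i - y i) * f (Function.update x i false)) = 0 := by
  classical
  rw [← Equiv.sum_comp (Equiv.piSplitAt i (fun _ => Bool)).symm]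
  rw [Fintype.sum_prod_type, Fintype.sum_bool, ← Finset.sum_add_distrib]
  apply Finset.sum_eq_zero
  intro g _
  have key : ∀ b : Bool, (Equiv.piSplitAt i (fun _ => Bool)).symm (b, g) =
      Function.update ((Equiv.piSplitAt i (fun _ => Bool)).symm (false, g)) i b := by
    intro b
    funext j
    by_cases hj : j = i
    · subst hj; simp [Equiv.piSplitAt_symm_apply]
    · simp [Equiv.piSplitAt_symm_apply, hj, Function.update_of_ne hj]
  set z := (Equiv.piSplitAt i (fun _ => Bool)).symm (false, g) with hz
  have hzi : z i = false := by simp [hz, Equiv.piSplitAt_symm_apply]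
  have hzf : Function.update z i false = z := by rw [← hzi, Function.update_eq_self]
  have hupd : Function.update (Function.update z i true) i false = z := by
    rw [Function.update_idem, hzf]
  have hw : ∀ b : Bool, bernWeight y (Function.update z i b) =
      (if b then y i else 1 - y i) * ∏ j ∈ Finset.univ.erase i, (if z j then y j else 1 - y j) := by
    intro b
    unfold bernWeight
    rw [← Finset.mul_prod_erase Finset.univ _ (Finset.mem_univ i)]
    congr 1
    · simp
    · apply Finset.prod_congr rfl
      intro j hj
      rw [Function.update_of_ne (Finset.ne_of_mem_erase hj)]
  have hX : ∀ b : Bool, boolToReal (Function.update z i b) i = if b then 1 else 0 := by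
    intro b; simp [boolToReal]
  rw [key true, hzf, hupd, hw true, hX true]
  have hwz : bernWeight y z = (1 - y i) * ∏ j ∈ Finset.univ.erase i, (if z j then y j else 1 - y j) := by
    have := hw false; rw [hzf] at this; simpa using this
  have hXz : boolToReal z i = 0 := by simp [boolToReal, hzi]
  rw [hwz, hXz]
  simp only [if_true]
  ring


lemma segment_mem {n : ℕ} {y z : Fin n → ℝ} (hy : y ∈ Set.Icc (0 : Fin n → ℝ) 1)
    (hz : z ∈ Set.Icc (0 : Fin n → ℝ) 1) {t : ℝ} (ht : t ∈ Set.Icc (0:ℝ) 1) :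
    y + t • (z - y) ∈ Set.Icc (0 : Fin n → ℝ) 1 := by
  constructor <;> intro i <;>
    simp only [Pi.add_apply, Pi.smul_apply, Pi.sub_apply, smul_eq_mul, Pi.zero_apply, Pi.one_apply]
  · nlinarith [show (0:ℝ) ≤ y i from hy.1 i, show y i ≤ 1 from hy.2 i,
      show (0:ℝ) ≤ z i from hz.1 i, show z i ≤ 1 from hz.2 i, ht.1, ht.2]
  · nlinarith [show (0:ℝ) ≤ y i from hy.1 i, show y i ≤ 1 from hy.2 i,
      show (0:ℝ) ≤ z i from hz.1 i, show z i ≤ 1 from hz.2 i, ht.1, ht.2]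

lemma update_mem {n : ℕ} {z : Fin n → ℝ} (hz : z ∈ Set.Icc (0 : Fin n → ℝ) 1)
    {i : Fin n} {s : ℝ} (hs : s ∈ Set.Icc (0:ℝ) 1) :
    Function.update z i s ∈ Set.Icc (0 : Fin n → ℝ) 1 := by
  constructor <;> intro j <;> by_cases hj : j = i
  · subst hj; simpa using hs.1
  · simpa [Function.update_of_ne hj] using hz.1 j
  · subst hj; simpa using hs.2
  · simpa [Function.update_of_ne hj] using hz.2 j

lemma update_hasDerivAt {n : ℕ} {g : (Fin n → ℝ) → ℝ} (hg : Differentiable ℝ g)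
    (z : Fin n → ℝ) (i : Fin n) (s : ℝ) :
    HasDerivAt (fun u => g (Function.update z i u))
      (fderiv ℝ g (Function.update z i s) (Pi.single i 1)) s := by
  have hcurve : ∀ u : ℝ, Function.update z i u = z + (u - z i) • (Pi.single i 1 : Fin n → ℝ) := by
    intro u
    funext j
    by_cases hj : j = i
    · subst hj; simp
    · simp [Function.update_of_ne hj, Pi.single_eq_of_ne hj]
  have hc : HasDerivAt (fun u : ℝ => z + (u - z i) • (Pi.single i 1 : Fin n → ℝ))
      ((Pi.single i 1 : Fin n → ℝ)) s := by
    have := (((hasDerivAt_id s).sub_const (z i)).smul_const (Pi.single i 1 : Fin n → ℝ)).const_add z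
    simpa using this
  have hfd : HasFDerivAt g (fderiv ℝ g (Function.update z i s)) (Function.update z i s) :=
    (hg _).hasFDerivAt
  rw [hcurve s] at hfd
  have := hfd.comp_hasDerivAt s hc
  simpa [Function.comp_def, ← hcurve] using this

lemma line_mvt {n : ℕ} {g : (Fin n → ℝ) → ℝ} (hg : Differentiable ℝ g) {C : ℝ} {i : Fin n}
    (hC : ∀ z ∈ Set.Icc (0 : Fin n → ℝ) 1, |fderiv ℝ g z (Pi.single i 1)| ≤ C)
    {z : Fin n → ℝ} (hz : z ∈ Set.Icc (0 : Fin n → ℝ) 1) {b : ℝ} (hb : b ∈ Set.Icc (0:ℝ) 1) :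
    |g (Function.update z i b) - g z| ≤ C * |b - z i| := by
  have hzi : z i ∈ Set.Icc (0:ℝ) 1 := ⟨hz.1 i, hz.2 i⟩
  have hsub : Set.uIcc (z i) b ⊆ Set.Icc (0:ℝ) 1 := by
    rw [show Set.Icc (0:ℝ) 1 = Set.uIcc 0 1 from (Set.uIcc_of_le zero_le_one).symm]
    exact Set.uIcc_subset_uIcc (by rwa [Set.uIcc_of_le zero_le_one]) (by rwa [Set.uIcc_of_le zero_le_one])
  have key := Convex.norm_image_sub_le_of_norm_hasDerivWithin_le
    (f := fun u => g (Function.update z i u))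
    (f' := fun u => fderiv ℝ g (Function.update z i u) (Pi.single i 1))
    (s := Set.uIcc (z i) b) (C := C)
    (fun u _ => (update_hasDerivAt hg z i u).hasDerivWithinAt)
    (fun u hu => by
      rw [Real.norm_eq_abs]
      exact hC _ (update_mem hz (hsub hu)))
    (convex_uIcc _ _) Set.left_mem_uIcc Set.right_mem_uIcc
  simpa only [Real.norm_eq_abs, Function.update_eq_self] using key


lemma fderiv_pi_sum {n : ℕ} {h : (Fin n → ℝ) → ℝ} (z v : Fin n → ℝ) :
    fderiv ℝ h z v = ∑ i, v i * fderiv ℝ h z (Pi.single i 1) := by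
  have hv : v = ∑ i, v i • (Pi.single i 1 : Fin n → ℝ) := by
    conv_lhs => rw [pi_eq_sum_univ v]
    apply Finset.sum_congr rfl
    intro i _
    congr 1
    funext j
    simp [Pi.single_apply, eq_comm]
  conv_lhs => rw [hv]
  rw [map_sum]
  simp [smul_eq_mul]

lemma ftc_line {n : ℕ} {h : (Fin n → ℝ) → ℝ} (hh : ContDiff ℝ 2 h) (y v : Fin n → ℝ) :
    h (y + v) - h y = ∫ t in (0:ℝ)..1, fderiv ℝ h (y + t • v) v := by
  have hdiff : Differentiable ℝ h := hh.differentiable (by norm_num)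
  have hd : ∀ t : ℝ, HasDerivAt (fun s : ℝ => h (y + s • v)) (fderiv ℝ h (y + t • v) v) t := by
    intro t
    have h2 : HasDerivAt (fun s : ℝ => y + s • v) v t := by
      simpa using ((hasDerivAt_id t).smul_const v).const_add y
    have h1 : HasFDerivAt h (fderiv ℝ h (y + t • v)) (y + t • v) := (hdiff _).hasFDerivAt
    simpa [Function.comp_def] using h1.comp_hasDerivAt t h2
  have hcontf : Continuous fun z : Fin n → ℝ => fderiv ℝ h z :=
    (hh.fderiv_right (m := 1) (by norm_num)).continuous
  have hcont : Continuous fun t : ℝ => fderiv ℝ h (y + t • v) v := by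
    exact (hcontf.comp (by continuity)).clm_apply continuous_const
  rw [intervalIntegral.integral_eq_sub_of_hasDerivAt (fun t _ => hd t)
    (hcont.intervalIntegrable 0 1)]
  simp

lemma h1_contDiff {n : ℕ} {h : (Fin n → ℝ) → ℝ} (hh : ContDiff ℝ 2 h) (i : Fin n) :
    ContDiff ℝ 1 (fun z => fderiv ℝ h z (Pi.single i 1)) :=
  (hh.fderiv_right (m := 1) (by norm_num)).clm_apply contDiff_const

lemma core_bound {n : ℕ} {h : (Fin n → ℝ) → ℝ} (hh : ContDiff ℝ 2 h)
    {α : ℝ} {β γ : Fin n → ℝ}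
    (hα : ∀ x ∈ Set.Icc (0 : Fin n → ℝ) 1, |h x| ≤ α)
    (hβ : ∀ x ∈ Set.Icc (0 : Fin n → ℝ) 1, ∀ i, |fderiv ℝ h x (Pi.single i 1)| ≤ β i)
    (hγ : ∀ x ∈ Set.Icc (0 : Fin n → ℝ) 1, ∀ i,
      |fderiv ℝ (fun z => fderiv ℝ h z (Pi.single i 1)) x (Pi.single i 1)| ≤ γ i)
    {y : Fin n → ℝ} (hy : y ∈ Set.Icc (0 : Fin n → ℝ) 1) (i : Fin n)
    {t : ℝ} (ht : t ∈ Set.Icc (0:ℝ) 1) :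
    ∑ x : Fin n → Bool, bernWeight y x * ((boolToReal x i - y i) *
      (fderiv ℝ h (y + t • (boolToReal x - y)) (Pi.single i 1) * (h (boolToReal x) - h y)))
      ≤ 2 * α * γ i * t + β i ^ 2 := by
  classical
  set K : (Fin n → Bool) → ℝ := fun x =>
    fderiv ℝ h (y + t • (boolToReal x - y)) (Pi.single i 1) * (h (boolToReal x) - h y) with hK
  have hdiff : Differentiable ℝ h := hh.differentiable (by norm_num)
  have h1diff : Differentiable ℝ (fun z => fderiv ℝ h z (Pi.single i 1)) :=
    (h1_contDiff hh i).differentiable one_ne_zero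
  have hα0 : 0 ≤ α := (abs_nonneg _).trans (hα y hy)
  have hβ0 : 0 ≤ β i := (abs_nonneg _).trans (hβ y hy i)
  have hγ0 : 0 ≤ γ i := (abs_nonneg _).trans (hγ y hy i)
  have hyi0 : (0:ℝ) ≤ y i := hy.1 i
  have hyi1 : y i ≤ 1 := hy.2 i
  have step1 : ∑ x : Fin n → Bool, bernWeight y x * ((boolToReal x i - y i) * K x)
      = ∑ x : Fin n → Bool, bernWeight y x *
          ((boolToReal x i - y i) * (K x - K (Function.update x i false))) := by
    have hz := sum_zero_trick y i K
    rw [Finset.sum_congr rfl (fun x _ =>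
      show bernWeight y x * ((boolToReal x i - y i) * (K x - K (Function.update x i false)))
        = bernWeight y x * ((boolToReal x i - y i) * K x)
          - bernWeight y x * ((boolToReal x i - y i) * K (Function.update x i false)) from by ring),
      Finset.sum_sub_distrib, hz, sub_zero]
  rw [step1]
  -- the key pointwise bound
  have hKbound : ∀ x : Fin n → Bool,
      |K x - K (Function.update x i false)| ≤ 2 * α * γ i * t + β i ^ 2 := by
    intro x
    set X := boolToReal x with hXdef
    have hXmem := boolToReal_mem x
    have hXi01 : X i = 0 ∨ X i = 1 := by
      simp only [hXdef, boolToReal]; cases x i <;> simp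
    have hXi0 : 0 ≤ X i := by rcases hXi01 with h'|h' <;> rw [h'] <;> norm_num
    have hXi1 : X i ≤ 1 := by rcases hXi01 with h'|h' <;> rw [h'] <;> norm_num
    have hX0 : boolToReal (Function.update x i false) = Function.update X i 0 := by
      funext j
      by_cases hj : j = i
      · subst hj; simp [boolToReal]
      · simp [hXdef, boolToReal, Function.update_of_ne hj]
    set z := y + t • (X - y) with hzdef
    have hzmem : z ∈ Set.Icc (0 : Fin n → ℝ) 1 := segment_mem hy hXmem ht
    have hbmem : (1 - t) * y i ∈ Set.Icc (0:ℝ) 1 := by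
      constructor <;> nlinarith [ht.1, ht.2]
    have hz0 : y + t • (Function.update X i 0 - y) = Function.update z i ((1 - t) * y i) := by
      funext j
      by_cases hj : j = i
      · subst hj
        simp only [hzdef, Function.update_self, Pi.add_apply, Pi.smul_apply, Pi.sub_apply,
          smul_eq_mul]
        ring
      · simp [hzdef, Function.update_of_ne hj]
    have hz0mem : Function.update z i ((1 - t) * y i) ∈ Set.Icc (0 : Fin n → ℝ) 1 :=
      update_mem hzmem hbmem
    have hzi : z i = y i + t * (X i - y i) := by simp [hzdef]
    have e1 : |fderiv ℝ h (Function.update z i ((1 - t) * y i)) (Pi.single i 1)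
        - fderiv ℝ h z (Pi.single i 1)| ≤ γ i * |(1 - t) * y i - z i| :=
      line_mvt h1diff (fun w hw => hγ w hw i) hzmem hbmem
    have e1' : |(1 - t) * y i - z i| = t * X i := by
      rw [hzi]
      rw [show (1 - t) * y i - (y i + t * (X i - y i)) = -(t * X i) by ring, abs_neg,
        abs_of_nonneg (mul_nonneg ht.1 hXi0)]
    have e2 : |h (Function.update X i 0) - h X| ≤ β i * |0 - X i| :=
      line_mvt hdiff (fun w hw => hβ w hw i) hXmem ⟨le_refl 0, zero_le_one⟩
    have e2' : |(0:ℝ) - X i| = X i := by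
      rw [zero_sub, abs_neg, abs_of_nonneg hXi0]
    have e3 : |fderiv ℝ h (Function.update z i ((1 - t) * y i)) (Pi.single i 1)| ≤ β i :=
      hβ _ hz0mem i
    have e4 : |h X - h y| ≤ 2 * α := by
      calc |h X - h y| ≤ |h X| + |h y| := abs_sub _ _
        _ ≤ α + α := add_le_add (hα _ hXmem) (hα _ hy)
        _ = 2 * α := by ring
    have hKx : K x = fderiv ℝ h z (Pi.single i 1) * (h X - h y) := rfl
    have hKx0 : K (Function.update x i false)
        = fderiv ℝ h (Function.update z i ((1 - t) * y i)) (Pi.single i 1)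
          * (h (Function.update X i 0) - h y) := by
      simp only [hK, hX0, hz0]
    rw [hKx, hKx0]
    set A := fderiv ℝ h z (Pi.single i 1) with hA
    set A0 := fderiv ℝ h (Function.update z i ((1 - t) * y i)) (Pi.single i 1) with hA0
    set u := h X - h y with hu
    set u0 := h (Function.update X i 0) - h y with hu0
    have hdecomp : A * u - A0 * u0 = (A - A0) * u + A0 * (u - u0) := by ring
    have habs : |A * u - A0 * u0| ≤ |A - A0| * |u| + |A0| * |u - u0| := by
      rw [hdecomp]
      calc |(A - A0) * u + A0 * (u - u0)| ≤ |(A - A0) * u| + |A0 * (u - u0)| := abs_add_le _ _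
        _ = |A - A0| * |u| + |A0| * |u - u0| := by rw [abs_mul, abs_mul]
    have eAA0 : |A - A0| ≤ γ i * (t * X i) := by
      rw [abs_sub_comm]
      calc |A0 - A| ≤ γ i * |(1 - t) * y i - z i| := e1
        _ = γ i * (t * X i) := by rw [e1']
    have euu0 : |u - u0| ≤ β i * X i := by
      rw [abs_sub_comm]
      have : u0 - u = h (Function.update X i 0) - h X := by rw [hu, hu0]; ring
      rw [this]
      calc |h (Function.update X i 0) - h X| ≤ β i * |0 - X i| := e2
        _ = β i * X i := by rw [e2']
    calc |A * u - A0 * u0| ≤ |A - A0| * |u| + |A0| * |u - u0| := habs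
      _ ≤ (γ i * (t * X i)) * (2 * α) + β i * (β i * X i) := by
          apply add_le_add
          · exact mul_le_mul eAA0 e4 (abs_nonneg _) (mul_nonneg hγ0 (mul_nonneg ht.1 hXi0))
          · exact mul_le_mul e3 euu0 (abs_nonneg _) hβ0
      _ ≤ 2 * α * γ i * t + β i ^ 2 := by
          nlinarith [mul_nonneg (mul_nonneg (mul_nonneg hα0 hγ0) ht.1) (sub_nonneg.2 hXi1),
            mul_nonneg (mul_nonneg hβ0 hβ0) (sub_nonneg.2 hXi1)]
  -- combine
  have hcle : ∀ x : Fin n → Bool, |boolToReal x i - y i| ≤ 1 := by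
    intro x
    have hXi01 : boolToReal x i = 0 ∨ boolToReal x i = 1 := by
      simp only [boolToReal]; cases x i <;> simp
    rw [abs_le]
    rcases hXi01 with h'|h' <;> rw [h'] <;> constructor <;> linarith
  calc ∑ x : Fin n → Bool, bernWeight y x *
        ((boolToReal x i - y i) * (K x - K (Function.update x i false)))
      ≤ ∑ x : Fin n → Bool, bernWeight y x * (2 * α * γ i * t + β i ^ 2) := by
        apply Finset.sum_le_sum
        intro x _
        apply mul_le_mul_of_nonneg_left _ (bernWeight_nonneg hy x)
        calc (boolToReal x i - y i) * (K x - K (Function.update x i false))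
            ≤ |(boolToReal x i - y i) * (K x - K (Function.update x i false))| := le_abs_self _
          _ = |boolToReal x i - y i| * |K x - K (Function.update x i false)| := abs_mul _ _
          _ ≤ 1 * (2 * α * γ i * t + β i ^ 2) := by
              apply mul_le_mul (hcle x) (hKbound x) (abs_nonneg _) zero_le_one
          _ = 2 * α * γ i * t + β i ^ 2 := one_mul _
    _ = 2 * α * γ i * t + β i ^ 2 := by
        rw [← Finset.sum_mul, sum_bernWeight, one_mul]

theorem second_moment_bound (n : ℕ) (h : (Fin n → ℝ) → ℝ) (hh : ContDiff ℝ 2 h)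
    (α : ℝ) (β γ : Fin n → ℝ)
    (hα : ∀ x ∈ Set.Icc (0 : Fin n → ℝ) 1, |h x| ≤ α)
    (hβ : ∀ x ∈ Set.Icc (0 : Fin n → ℝ) 1, ∀ i, |fderiv ℝ h x (Pi.single i 1)| ≤ β i)
    (hγ : ∀ x ∈ Set.Icc (0 : Fin n → ℝ) 1, ∀ i,
      |fderiv ℝ (fun z => fderiv ℝ h z (Pi.single i 1)) x (Pi.single i 1)| ≤ γ i)
    (y : Fin n → ℝ) (hy : y ∈ Set.Icc (0 : Fin n → ℝ) 1) :
    ∑ x : Fin n → Bool, bernWeight y x * (h (boolToReal x) - h y)^2 ≤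
      ∑ i, (α * γ i + (β i)^2) := by
  classical
  have hU : ∀ x : Fin n → Bool, bernWeight y x * (h (boolToReal x) - h y)^2
      = ∫ t in (0:ℝ)..1, ∑ i, bernWeight y x * ((boolToReal x i - y i) *
          (fderiv ℝ h (y + t • (boolToReal x - y)) (Pi.single i 1) * (h (boolToReal x) - h y))) := by
    intro x
    have hftc : (h (boolToReal x) - h y)
        = ∫ t in (0:ℝ)..1, fderiv ℝ h (y + t • (boolToReal x - y)) (boolToReal x - y) := by
      simpa using ftc_line hh y (boolToReal x - y)
    calc bernWeight y x * (h (boolToReal x) - h y)^2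
        = (bernWeight y x * (h (boolToReal x) - h y)) * (h (boolToReal x) - h y) := by ring
      _ = (bernWeight y x * (h (boolToReal x) - h y)) *
          ∫ t in (0:ℝ)..1, fderiv ℝ h (y + t • (boolToReal x - y)) (boolToReal x - y) := by
          rw [← hftc]
      _ = ∫ t in (0:ℝ)..1, (bernWeight y x * (h (boolToReal x) - h y)) *
          fderiv ℝ h (y + t • (boolToReal x - y)) (boolToReal x - y) :=
          (intervalIntegral.integral_const_mul _ _).symm
      _ = ∫ t in (0:ℝ)..1, ∑ i, bernWeight y x * ((boolToReal x i - y i) *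
          (fderiv ℝ h (y + t • (boolToReal x - y)) (Pi.single i 1) * (h (boolToReal x) - h y))) := by
          apply intervalIntegral.integral_congr
          intro t _
          beta_reduce
          rw [fderiv_pi_sum, Finset.mul_sum]
          exact Finset.sum_congr rfl (fun i _ => by simp only [Pi.sub_apply]; ring)
  have hcont : ∀ x : Fin n → Bool, Continuous fun t : ℝ =>
      ∑ i, bernWeight y x * ((boolToReal x i - y i) *
        (fderiv ℝ h (y + t • (boolToReal x - y)) (Pi.single i 1) * (h (boolToReal x) - h y))) := by
    intro x
    apply continuous_finset_sum
    intro i _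
    have hf : Continuous fun t : ℝ =>
        fderiv ℝ h (y + t • (boolToReal x - y)) (Pi.single i 1) :=
      (h1_contDiff hh i).continuous.comp (by continuity)
    exact continuous_const.mul (continuous_const.mul (hf.mul continuous_const))
  calc ∑ x : Fin n → Bool, bernWeight y x * (h (boolToReal x) - h y)^2
      = ∑ x : Fin n → Bool, ∫ t in (0:ℝ)..1, ∑ i, bernWeight y x * ((boolToReal x i - y i) *
          (fderiv ℝ h (y + t • (boolToReal x - y)) (Pi.single i 1) * (h (boolToReal x) - h y))) :=
        Finset.sum_congr rfl (fun x _ => hU x)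
    _ = ∫ t in (0:ℝ)..1, ∑ x : Fin n → Bool, ∑ i, bernWeight y x * ((boolToReal x i - y i) *
          (fderiv ℝ h (y + t • (boolToReal x - y)) (Pi.single i 1) * (h (boolToReal x) - h y))) :=
        (intervalIntegral.integral_finset_sum
          (fun x _ => (hcont x).intervalIntegrable 0 1)).symm
    _ ≤ ∫ t in (0:ℝ)..1, ∑ i, (2 * α * γ i * t + β i ^ 2) := by
        apply intervalIntegral.integral_mono_on zero_le_one
        · exact (continuous_finset_sum _ (fun x _ => hcont x)).intervalIntegrable 0 1
        · exact Continuous.intervalIntegrable (by fun_prop) 0 1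
        · intro t ht
          rw [Finset.sum_comm]
          exact Finset.sum_le_sum (fun i _ => core_bound hh hα hβ hγ hy i ht)
    _ = ∑ i, (α * γ i + (β i)^2) := by
        rw [intervalIntegral.integral_finset_sum (f := fun i (t : ℝ) => 2 * α * γ i * t + β i ^ 2)
          (fun i _ => Continuous.intervalIntegrable (by fun_prop) 0 1)]
        apply Finset.sum_congr rfl
        intro i _
        rw [intervalIntegral.integral_add
          (Continuous.intervalIntegrable (by fun_prop) 0 1)
          (continuous_const.intervalIntegrable 0 1)]
        rw [intervalIntegral.integral_const_mul]
        open intervalIntegral in rw [integral_id, intervalIntegral.integral_const]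
        norm_num
        ring
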